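/- Let b₀, b₁, …, b_m be integers with |b_i| ≥ 2 for i = 1, …, m. Then the value of the finite continued fraction [b₀,b₁,…,b_m] = b₀ − 1/(b₁ − 1/(⋯ − 1/b_m)) is a rational number, and writing it in lowest terms as c/d with d > 0 and gcd(c,d) = 1, one has m < d. -/

import Mathlib

open Filter Topology OnePoint

/-- The Möbius map `z ↦ b - 1/z` on the one-point compactification `ℝ∞` of `ℝ`. -/
noncomputable def mob (b : ℤ) (z : OnePoint ℝ) : OnePoint ℝ :=
  Option.elim z ((b : ℝ) : OnePoint ℝ)
    (fun x => if x = 0 then (∞ : OnePoint ℝ) else (((b : ℝ) - 1 / x : ℝ) : OnePoint ℝ))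

/-- Value of a finite continued fraction `[b₀, …, b_m]`, i.e. `s₀(s₁(⋯ s_m(∞)))`. -/
noncomputable def cfVal : List ℤ → OnePoint ℝ
  | [] => ∞
  | b :: t => mob b (cfVal t)

/-- The `n`th convergent `v_n = S_n(∞)` of the continued fraction `[b₀, b₁, …]`. -/
noncomputable def cfConv (b : ℕ → ℤ) (n : ℕ) : OnePoint ℝ :=
  cfVal ((List.range (n + 1)).map b)

/-- `m` is a positive index at which the coefficient is `0`, `1` or `-1`. -/
def badIdx (b : ℕ → ℤ) (m : ℕ) : Prop :=
  1 ≤ m ∧ (b m = 0 ∨ b m = 1 ∨ b m = -1)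

instance (b : ℕ → ℤ) : DecidablePred (badIdx b) := fun m => by
  unfold badIdx; infer_instance

-- The singularization map `Φ` on integer sequences.
open Classical in
noncomputable def Phi (b : ℕ → ℤ) : ℕ → ℤ :=
  if h : ∃ m, badIdx b m then
    let m := Nat.find h
    if b m = 0 then
      fun k => if k + 1 < m then b k
        else if k = m - 1 then b (m - 1) + b (m + 1)
        else b (k + 2)
    else if b m = 1 then
      fun k => if k + 1 < m then b k
        else if k = m - 1 then b (m - 1) - 1
        else if k = m then b (m + 1) - 1
        else b (k + 1)
    else
      fun k => if k + 1 < m then b k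
        else if k = m - 1 then b (m - 1) + 1
        else if k = m then b (m + 1) + 1
        else b (k + 1)
  else b

-- `p(b) ∈ ℕ ∪ {∞}`: the least positive index at which `0`, `1` or `-1` occurs.
open Classical in
noncomputable def pIdx (b : ℕ → ℤ) : ℕ∞ :=
  if h : ∃ m, badIdx b m then (Nat.find h : ℕ∞) else ⊤

/-- `p⁽ⁿ⁾ → ∞` as `n → ∞`. -/
def PTendsToTop (b : ℕ → ℤ) : Prop :=
  ∀ N : ℕ, ∃ M : ℕ, ∀ n ≥ M, (N : ℕ∞) < pIdx (Phi^[n] b)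

/-- `p = liminf pⁿ`, as a natural number (junk value if the liminf is `∞`). -/
noncomputable def pLim (b : ℕ → ℤ) : ℕ :=
  (Filter.liminf (fun n => pIdx (Phi^[n] b)) Filter.atTop).toNat

/-- `q⁽ⁿ⁾ = |b⁽ⁿ⁾_{p-1}|`. -/
noncomputable def qSeq (b : ℕ → ℤ) (n : ℕ) : ℕ :=
  ((Phi^[n] b) (pLim b - 1)).natAbs

/-- Two continued fractions have the same tail. -/
def SameTail (b c : ℕ → ℤ) : Prop := ∃ r s : ℕ, ∀ k : ℕ, b (r + k) = c (s + k)

/-- `bstar` is the limit continued fraction: each coefficient of `Φⁿ(b)` stabilises on it. -/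
def EventuallyCoeff (b bstar : ℕ → ℤ) : Prop :=
  ∀ k : ℕ, ∃ N : ℕ, ∀ n ≥ N, Phi^[n] b k = bstar k

/-- The point of `ℝ∞` represented by the integer fraction `a/b` (`∞` when `b = 0`). -/
noncomputable def intPt (a b : ℤ) : OnePoint ℝ :=
  if b = 0 then ∞ else (((a : ℝ) / (b : ℝ)) : OnePoint ℝ)

/-- Adjacency in the Farey graph: `x = a/b`, `y = c/d` with `ad - bc = ±1`. -/
def FareyAdj (x y : OnePoint ℝ) : Prop :=
  ∃ a b c d : ℤ, x = intPt a b ∧ y = intPt c d ∧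
    (a * d - b * c = 1 ∨ a * d - b * c = -1)

/-- `x` is an extended rational, i.e. a member of `ℚ∞ = ℚ ∪ {∞} ⊆ ℝ∞`. -/
def IsExtRat (x : OnePoint ℝ) : Prop :=
  x = ∞ ∨ ∃ q : ℚ, x = ((q : ℝ) : OnePoint ℝ)

-- One step of the index-tracking sequence, for the current coefficient sequence `c`.
open Classical in
noncomputable def eStep (c : ℕ → ℤ) (e : ℕ) : Option ℕ :=
  if h : ∃ m, badIdx c m then
    let m := Nat.find h
    if c m = 0 then
      if e + 2 ≤ m then Option.some e
      else if e = m - 1 ∨ e = m then (none : Option ℕ)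
      else Option.some (e - 2)
    else
      if e + 2 ≤ m then Option.some e
      else if e = m - 1 then (none : Option ℕ)
      else Option.some (e - 1)
  else Option.some e

/-- The index-tracking sequence `e⁽⁰⁾(k), e⁽¹⁾(k), …` (`none` once it has terminated). -/
noncomputable def eSeq (b : ℕ → ℤ) (k : ℕ) : ℕ → Option ℕ
  | 0 => Option.some k
  | n + 1 => (eSeq b k n).bind (eStep (Phi^[n] b))


/-- Numerator/denominator pair of a finite continued fraction (computed from the tail). -/
def cfP : List ℤ → ℤ × ℤ
  | [] => (1, 0)
  | c :: t => (c * (cfP t).1 - (cfP t).2, (cfP t).1)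

lemma mob_infty' (b : ℤ) : mob b ∞ = ((b : ℝ) : OnePoint ℝ) := rfl

lemma mob_coe' (b : ℤ) (x : ℝ) :
    mob b ((x : ℝ) : OnePoint ℝ)
      = if x = 0 then (∞ : OnePoint ℝ) else (((b : ℝ) - 1 / x : ℝ) : OnePoint ℝ) := rfl

lemma mob_intPt (b N D : ℤ) (hN : N ≠ 0) (hcop : IsCoprime N D) :
    mob b (intPt N D) = intPt (b * N - D) N := by
  by_cases hD : D = 0
  · subst hD
    have h1 : N = 1 ∨ N = -1 := Int.isUnit_iff.mp (isCoprime_zero_right.mp hcop)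
    have hval : ((b : ℝ) * N - 0) / N = (b : ℝ) := by
      rcases h1 with h | h <;> subst h <;> norm_num
    rw [show intPt N 0 = ∞ from if_pos rfl, mob_infty',
        show intPt (b * N - 0) N = ((((b * N - 0 : ℤ) : ℝ) / (N : ℝ)) : OnePoint ℝ) from if_neg hN]
    congr 1
    rw [show (((b * N - 0 : ℤ) : ℝ)) = ((b : ℝ) * N - 0) by push_cast; ring, hval]
  · have hNr : (N : ℝ) ≠ 0 := by exact_mod_cast hN
    have hDr : (D : ℝ) ≠ 0 := by exact_mod_cast hD
    have hx : ((N : ℝ) / D) ≠ 0 := div_ne_zero hNr hDr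
    simp only [intPt, if_neg hD, if_neg hN]
    rw [mob_coe', if_neg hx]
    congr 1
    push_cast
    rw [one_div_div, sub_div, mul_div_cancel_right₀ _ hNr]

lemma cfKey : ∀ l : List ℤ, (∀ x ∈ l, 2 ≤ |x|) →
    IsCoprime (cfP l).1 (cfP l).2 ∧ |(cfP l).2| < |(cfP l).1| ∧
    (l.length + 1 : ℤ) ≤ |(cfP l).1| ∧ cfVal l = intPt (cfP l).1 (cfP l).2 := by
  intro l
  induction l with
  | nil =>
    intro _
    refine ⟨isCoprime_one_left, by simp [cfP], by simp [cfP], ?_⟩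
    simp [cfP, cfVal, intPt]
  | cons c t ih =>
    intro h
    obtain ⟨hcop, hlt, hlen, hval⟩ := ih (fun x hx => h x (List.mem_cons_of_mem _ hx))
    set N := (cfP t).1 with hNdef
    set D := (cfP t).2 with hDdef
    have hN0 : N ≠ 0 := by
      intro h0; rw [h0] at hlt; simp at hlt
      exact absurd hlt (not_lt.mpr (abs_nonneg D))
    have hc : 2 ≤ |c| := h c List.mem_cons_self
    have hcP : (cfP (c :: t)).1 = c * N - D := rfl
    have hcP2 : (cfP (c :: t)).2 = N := rfl
    have habs : |c * N| - |D| ≤ |c * N - D| := abs_sub_abs_le_abs_sub _ _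
    have hmul : |c * N| = |c| * |N| := abs_mul c N
    have h2N : 2 * |N| ≤ |c| * |N| := mul_le_mul_of_nonneg_right hc (abs_nonneg N)
    have hgrow : |N| + 1 ≤ |c * N - D| := by
      have hD1 : |D| + 1 ≤ |N| := hlt
      linarith [habs, hmul, h2N]
    refine ⟨?_, ?_, ?_, ?_⟩
    · rw [hcP, hcP2]
      have h1 : IsCoprime (-D) N := hcop.symm.neg_left
      have h2 := h1.add_mul_right_left c
      rwa [show -D + c * N = c * N - D by ring] at h2
    · rw [hcP, hcP2]; linarith
    · rw [hcP]
      simp only [List.length_cons]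
      have : (t.length + 1 : ℤ) ≤ |N| := hlen
      push_cast
      linarith
    · rw [hcP, hcP2]
      show mob c (cfVal t) = _
      rw [hval]
      exact mob_intPt c N D hN0 hcop

/-- **Lemma 4.** If `|bᵢ| ≥ 2` for `i = 1, …, m`, then the finite continued fraction
`[b₀, b₁, …, b_m]` is a rational `c/d` in lowest terms with `m < d`. -/
theorem stmt10 (b : ℕ → ℤ) (m : ℕ) (hb : ∀ i : ℕ, 1 ≤ i → i ≤ m → 2 ≤ |b i|) :
    ∃ q : ℚ, cfConv b m = ((q : ℝ) : OnePoint ℝ) ∧ m < q.den := by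
  -- the tail list `[b 1, …, b m]`
  set T : List ℤ := (List.range m).map (fun i => b (i + 1)) with hT
  have hTmem : ∀ x ∈ T, 2 ≤ |x| := by
    intro x hx
    rw [hT, List.mem_map] at hx
    obtain ⟨i, hi, rfl⟩ := hx
    rw [List.mem_range] at hi
    exact hb (i + 1) (Nat.le_add_left _ _) hi
  obtain ⟨hcop, hlt, hlen, hval⟩ := cfKey T hTmem
  set N := (cfP T).1 with hNdef
  set D := (cfP T).2 with hDdef
  have hTlen : T.length = m := by simp [hT]
  have hN0 : N ≠ 0 := by
    intro h0; rw [h0] at hlt; simp at hlt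
    exact absurd hlt (not_lt.mpr (abs_nonneg D))
  -- the whole list is `b 0 :: T`
  have hlist : (List.range (m + 1)).map b = b 0 :: T := by
    rw [List.range_succ_eq_map, List.map_cons, List.map_map]
    rfl
  set c : ℤ := b 0 * N - D with hcdef
  have hval' : cfConv b m = intPt c N := by
    rw [cfConv, hlist]
    show mob (b 0) (cfVal T) = _
    rw [hval]
    exact mob_intPt (b 0) N D hN0 hcop
  -- coprimality of `c` and `N`
  have hcopcN : IsCoprime c N := by
    have h1 : IsCoprime (-D) N := hcop.symm.neg_left
    have h2 := h1.add_mul_right_left (b 0)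
    rwa [show -D + b 0 * N = c by rw [hcdef]; ring] at h2
  have hgcd : c.natAbs.Coprime N.natAbs := Int.isCoprime_iff_gcd_eq_one.mp hcopcN
  -- build the rational
  set num : ℤ := if 0 < N then c else -c with hnum
  have hreduced : num.natAbs.Coprime N.natAbs := by
    rw [hnum]; split <;> simpa using hgcd
  have hdNZ : N.natAbs ≠ 0 := Int.natAbs_ne_zero.mpr hN0
  refine ⟨Rat.mk' num N.natAbs hdNZ hreduced, ?_, ?_⟩
  · rw [hval']
    have hden : ((Rat.mk' num N.natAbs hdNZ hreduced : ℚ) : ℝ)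
        = (num : ℝ) / (N.natAbs : ℝ) := by
      rw [Rat.cast_def]
    have hNr : (N : ℝ) ≠ 0 := by exact_mod_cast hN0
    have hNa : ((N.natAbs : ℕ) : ℝ) = |(N : ℝ)| := by
      rw [Nat.cast_natAbs, Int.cast_abs]
    have hfrac : (num : ℝ) / (N.natAbs : ℝ) = (c : ℝ) / (N : ℝ) := by
      rcases lt_or_gt_of_ne hN0 with hneg | hpos
      · have hNr' : (N : ℝ) < 0 := by exact_mod_cast hneg
        rw [hnum, if_neg (not_lt.mpr hneg.le), hNa, abs_of_neg hNr']
        push_cast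
        rw [neg_div_neg_eq]
      · have hNr' : (0 : ℝ) < N := by exact_mod_cast hpos
        rw [hnum, if_pos hpos, hNa, abs_of_pos hNr']
    rw [intPt, if_neg hN0, hden, hfrac]
  · show m < N.natAbs
    have : (m + 1 : ℤ) ≤ |N| := by rw [← hTlen]; exact_mod_cast hlen
    have h2 : (m + 1 : ℤ) ≤ (N.natAbs : ℤ) := by rwa [Int.abs_eq_natAbs] at this
    omega
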